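/- Let F be a free group of finite rank r, and let B be a basis of F that is minimal-total-length in its conjugacy class (i.e., there is no g in F such that conjugating every element of B by g strictly decreases the sum of the word lengths of the basis elements). Then no primitivity-blocking word appears as a subword of any element of B. (A word v is primitivity-blocking if v is not a subword of any cyclically reduced primitive element of F; an element is primitive if it belongs to some basis of F.) -/

import Mathlib

open FreeGroup

/-- The free group of rank `r` on the basis `Fin r`. -/
abbrev F (r : ℕ) := FreeGroup (Fin r)

/-- `v` is a subword of `u`: the reduced word of `v` occurs as a contiguous
block of the reduced word of `u`. -/
def Subword {α : Type*} [DecidableEq α] (v u : FreeGroup α) : Prop :=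
  v.toWord <:+: u.toWord

/-- `u` is cyclically reduced: the first letter of its reduced word is not the
inverse of its last letter. -/
def CyclRed {α : Type*} [DecidableEq α] (u : FreeGroup α) : Prop :=
  ∀ a ∈ u.toWord.head?, ∀ b ∈ u.toWord.getLast?, a ≠ (b.1, !b.2)

/-- `u` is primitive: some automorphism sends a generator to `u`
(equivalently, `u` belongs to a basis). -/
def IsPrimitive {α : Type*} [DecidableEq α] (u : FreeGroup α) : Prop :=
  ∃ (φ : FreeGroup α ≃* FreeGroup α) (i : α), φ (FreeGroup.of i) = u

/-- `v` is primitivity-blocking: it is not a subword of any cyclically reduced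
primitive element. -/
def PrimitivityBlocking {α : Type*} [DecidableEq α] (v : FreeGroup α) : Prop :=
  ∀ u : FreeGroup α, IsPrimitive u → CyclRed u → ¬ Subword v u

/-- Reduced word length. -/
def len {α : Type*} [DecidableEq α] (u : FreeGroup α) : ℕ := u.toWord.length

/-- `v` is `w`-orbit-blocking: for every automorphism `φ`, `v` is not a subword
of the cyclic reduction of `φ w` (i.e. of any cyclically reduced element
conjugate to `φ w`). -/
def OrbitBlocking {α : Type*} [DecidableEq α] (w v : FreeGroup α) : Prop :=
  ∀ (φ : FreeGroup α ≃* FreeGroup α) (c : FreeGroup α),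
    CyclRed c → IsConj c (φ w) → ¬ Subword v c

/-- A word is slender if some generator occurs (with exponent `±1`) at most
once in its reduced word. -/
def Slender {α : Type*} [DecidableEq α] (w : FreeGroup α) : Prop :=
  ∃ x : α, (w.toWord.countP fun p => decide (p.1 = x)) ≤ 1

section Aux
set_option linter.unusedSectionVars false

open FreeGroup List

variable {α : Type*} [DecidableEq α]

private def RCond (a b : α × Bool) : Prop := b ≠ (a.1, !a.2)

private lemma chain'_reduce (L : List (α × Bool)) :
    List.Chain' RCond (FreeGroup.reduce L) := by
  induction L with
  | nil => exact List.isChain_nil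
  | cons a L ih =>
    rw [reduce.cons]
    rcases h : reduce L with _ | ⟨hd, tl⟩
    · exact List.isChain_singleton _
    · rw [h] at ih
      dsimp only
      split_ifs with hc
      · exact ih.tail
      · refine List.isChain_cons_cons.2 ⟨?_, ih⟩
        intro he
        exact hc ⟨(congrArg Prod.fst he).symm, by
          have := congrArg Prod.snd he
          simp only at this
          simp [this]⟩

private lemma reduce_eq_self {L : List (α × Bool)} (h : List.Chain' RCond L) :
    FreeGroup.reduce L = L := by
  induction L with
  | nil => rfl
  | cons a L ih =>
    rw [reduce.cons, ih h.tail]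
    rcases L with _ | ⟨hd, tl⟩
    · rfl
    · dsimp only
      rw [if_neg]
      rintro ⟨h1, h2⟩
      exact (List.isChain_cons_cons.1 h).1 (Prod.ext h1.symm (by simp [h2]))

private lemma chain'_toWord (x : FreeGroup α) : List.Chain' RCond x.toWord := by
  rw [← reduce_toWord]; exact chain'_reduce _

private lemma toWord_mul {x y : FreeGroup α}
    (h : ∀ a ∈ x.toWord.getLast?, ∀ b ∈ y.toWord.head?, RCond a b) :
    (x * y).toWord = x.toWord ++ y.toWord := by
  conv_lhs => rw [← mk_toWord (x := x), ← mk_toWord (x := y)]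
  rw [mul_mk, toWord_mk, reduce_eq_self ((chain'_toWord x).append (chain'_toWord y) h)]

private lemma cancel_head {z : FreeGroup α} {t : α × Bool} {rest : List (α × Bool)}
    (h : z.toWord = t :: rest) :
    (FreeGroup.mk [(t.1, !t.2)] * z).toWord = rest := by
  conv_lhs => rw [← mk_toWord (x := z)]
  rw [mul_mk, List.singleton_append, toWord_mk, reduce.cons, reduce_toWord, h]
  dsimp only
  rw [if_pos ⟨rfl, rfl⟩]

private lemma inv_mk_single (t : α × Bool) :
    (FreeGroup.mk [t])⁻¹ = FreeGroup.mk [(t.1, !t.2)] := by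
  rw [inv_mk]; simp [invRev]

private lemma invRev_concat (L : List (α × Bool)) (t : α × Bool) :
    invRev (L ++ [(t.1, !t.2)]) = t :: invRev L := by
  simp [invRev]

private lemma len_eq_norm (u : FreeGroup α) : len u = u.norm := rfl

private lemma len_head_case {z : FreeGroup α} {t : α × Bool}
    (h : z.toWord.head? = some t) :
    len ((FreeGroup.mk [t])⁻¹ * z * FreeGroup.mk [t]) ≤ len z := by
  obtain ⟨rest, hrest⟩ : ∃ rest, z.toWord = t :: rest := by
    rcases hz : z.toWord with _ | ⟨a, rest⟩ <;> rw [hz] at h <;> simp_all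
  rw [inv_mk_single]
  have h1 : (FreeGroup.mk [(t.1, !t.2)] * z).toWord = rest := cancel_head hrest
  calc len (FreeGroup.mk [(t.1, !t.2)] * z * FreeGroup.mk [t])
      ≤ len (FreeGroup.mk [(t.1, !t.2)] * z) + len (FreeGroup.mk [t]) :=
        FreeGroup.norm_mul_le _ _
    _ ≤ rest.length + 1 := by
        rw [len_eq_norm, len_eq_norm]
        have := @FreeGroup.norm_mk_le α [t] _
        simp only [List.length_singleton] at this
        have h2 : (FreeGroup.mk [(t.1, !t.2)] * z).norm = rest.length := by
          rw [← len_eq_norm, len, h1]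
        omega
    _ = len z := by rw [len, hrest]; simp

private lemma len_last_case {z : FreeGroup α} {t : α × Bool}
    (h : z.toWord.getLast? = some (t.1, !t.2)) :
    len ((FreeGroup.mk [t])⁻¹ * z * FreeGroup.mk [t]) ≤ len z := by
  obtain ⟨L, hL⟩ : ∃ L, z.toWord = L ++ [(t.1, !t.2)] := by
    rcases List.eq_nil_or_concat z.toWord with hz | ⟨L, b, hz⟩
    · rw [hz] at h; simp at h
    · rw [List.concat_eq_append] at hz
      rw [hz, List.getLast?_concat] at h
      exact ⟨L, by rw [hz, Option.some_inj.1 h]⟩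
  have hinv : z⁻¹.toWord = t :: invRev L := by
    rw [toWord_inv, hL, invRev_concat]
  have key := len_head_case (z := z⁻¹) (t := t) (by rw [hinv, List.head?_cons])
  have heq : ((FreeGroup.mk [t])⁻¹ * z⁻¹ * FreeGroup.mk [t]) =
      ((FreeGroup.mk [t])⁻¹ * z * FreeGroup.mk [t])⁻¹ := by group
  rw [heq] at key
  rw [len_eq_norm, len_eq_norm] at key ⊢
  rwa [FreeGroup.norm_inv_eq, FreeGroup.norm_inv_eq] at key

private lemma len_both_case {z : FreeGroup α} {t : α × Bool} {mid : List (α × Bool)}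
    (h : z.toWord = t :: (mid ++ [(t.1, !t.2)])) :
    len ((FreeGroup.mk [t])⁻¹ * z * FreeGroup.mk [t]) + 2 = len z := by
  rw [inv_mk_single]
  set y := FreeGroup.mk [(t.1, !t.2)] * z with hy
  have h1 : y.toWord = mid ++ [(t.1, !t.2)] := cancel_head h
  have hinv : y⁻¹.toWord = t :: invRev mid := by rw [toWord_inv, h1, invRev_concat]
  have h2 : (FreeGroup.mk [(t.1, !t.2)] * y⁻¹).toWord = invRev mid := cancel_head hinv
  have heq : (FreeGroup.mk [(t.1, !t.2)] * y⁻¹) = (y * FreeGroup.mk [t])⁻¹ := by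
    rw [← inv_mk_single]; group
  have h3 : len (y * FreeGroup.mk [t]) = mid.length := by
    rw [len_eq_norm, ← FreeGroup.norm_inv_eq, ← heq, ← len_eq_norm, len, h2, invRev_length]
  rw [show FreeGroup.mk [(t.1, !t.2)] * z * FreeGroup.mk [t] = y * FreeGroup.mk [t] from by rw [hy],
    h3, len, h]
  simp

end Aux

set_option maxHeartbeats 1000000 in
theorem stmt0 (r : ℕ) (B : Fin r → F r)
    (hB : ∃ φ : F r ≃* F r, ∀ i, φ (FreeGroup.of i) = B i)
    (hmin : ∀ g : F r, (∑ i, len (B i)) ≤ ∑ i, len (g⁻¹ * B i * g)) :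
    ∀ (i : Fin r) (v : F r), PrimitivityBlocking v → ¬ Subword v (B i) := by
  intro i v hblock hsub
  obtain ⟨φ, hφ⟩ := hB
  by_cases hc : CyclRed (B i)
  · exact hblock (B i) ⟨φ, i, hφ i⟩ hc hsub
  -- extract the first letter t; the last letter is its inverse
  rw [CyclRed] at hc
  push_neg at hc
  obtain ⟨t, ht, b, hb, htb⟩ := hc
  have hbt : b = (t.1, !t.2) := by subst htb; simp
  rw [Option.mem_def] at ht hb
  subst hbt
  clear htb
  -- decompose the word of B i as t :: mid ++ [t⁻¹]
  obtain ⟨rest, hrest⟩ : ∃ rest, (B i).toWord = t :: rest := by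
    rcases hz : (B i).toWord with _ | ⟨a, rest⟩
    · rw [hz] at ht; simp at ht
    · rw [hz, List.head?_cons, Option.some_inj] at ht
      exact ⟨rest, by rw [ht]⟩
  have hrest_ne : rest ≠ [] := by
    rintro rfl
    rw [hrest] at hb
    simp only [List.getLast?_singleton, Option.some_inj] at hb
    have := congrArg Prod.snd hb
    simp at this
  obtain ⟨mid, hmid⟩ : ∃ mid, rest = mid ++ [(t.1, !t.2)] := by
    rcases List.eq_nil_or_concat rest with h | ⟨L, c, h⟩
    · exact absurd h hrest_ne
    · rw [List.concat_eq_append] at h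
      rw [hrest, h, show (t :: (L ++ [c])) = (t :: L) ++ [c] from rfl,
        List.getLast?_concat, Option.some_inj] at hb
      exact ⟨L, by rw [h, hb]⟩
  have hBiword : (B i).toWord = t :: (mid ++ [(t.1, !t.2)]) := by rw [hrest, hmid]
  -- conjugating by t decreases len (B i) by 2
  have hBi : len ((FreeGroup.mk [t])⁻¹ * B i * FreeGroup.mk [t]) + 2 = len (B i) :=
    len_both_case hBiword
  -- minimality forces some j ≠ i whose length strictly grows
  obtain ⟨j, hji, hj⟩ : ∃ j, j ≠ i ∧
      len (B j) < len ((FreeGroup.mk [t])⁻¹ * B j * FreeGroup.mk [t]) := by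
    by_contra hno
    push_neg at hno
    have hm := hmin (FreeGroup.mk [t])
    rw [← Finset.add_sum_erase _ (fun j => len (B j)) (Finset.mem_univ i),
      ← Finset.add_sum_erase _
        (fun j => len ((FreeGroup.mk [t])⁻¹ * B j * FreeGroup.mk [t]))
        (Finset.mem_univ i)] at hm
    have hs : ∑ j ∈ Finset.univ.erase i,
        len ((FreeGroup.mk [t])⁻¹ * B j * FreeGroup.mk [t]) ≤
        ∑ j ∈ Finset.univ.erase i, len (B j) :=
      Finset.sum_le_sum fun j hj => hno j (Finset.ne_of_mem_erase hj)
    omega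
  -- B j neither starts with t nor ends with t⁻¹, and is nonempty
  have hzhead : (B j).toWord.head? ≠ some t := fun h => absurd (len_head_case h) (by omega)
  have hzlast : (B j).toWord.getLast? ≠ some (t.1, !t.2) :=
    fun h => absurd (len_last_case h) (by omega)
  have hzne : (B j).toWord ≠ [] := by
    intro h
    have h1 : B j = 1 := FreeGroup.toWord_eq_nil_iff.1 h
    rw [h1, mul_one, inv_mul_cancel] at hj
    exact lt_irrefl _ hj
  -- the product B i * B j is reduced as written and cyclically reduced
  have hmul : (B i * B j).toWord = (B i).toWord ++ (B j).toWord := by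
    apply _root_.toWord_mul
    intro a ha c hcmem
    rw [Option.mem_def, hBiword,
      show (t :: (mid ++ [(t.1, !t.2)])) = (t :: mid) ++ [(t.1, !t.2)] from rfl,
      List.getLast?_concat, Option.some_inj] at ha
    subst ha
    intro hce
    apply hzhead
    rw [Option.mem_def] at hcmem
    rw [hcmem]
    simp [hce]
  have hcyc : CyclRed (B i * B j) := by
    intro a ha b' hb' hab
    rw [Option.mem_def, hmul, List.head?_append, hBiword, List.head?_cons,
      show ∀ o : Option (Fin r × Bool), (some t).or o = some t from fun _ => rfl,
      Option.some_inj] at ha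
    subst ha
    rw [Option.mem_def, hmul, List.getLast?_append] at hb'
    apply hzlast
    have hbj : (B j).toWord.getLast? = some b' := by
      rcases ho : (B j).toWord.getLast? with _ | c
      · exfalso
        rcases hz : (B j).toWord with _ | ⟨d, L⟩
        · exact hzne hz
        · rw [hz] at ho; simp at ho
      · rw [ho] at hb'
        exact hb'
    rw [hbj]
    simp [hab]
  -- B i * B j is primitive
  have hprim : IsPrimitive (B i * B j) := by
    have hfij : ∀ k : Fin r,
        (FreeGroup.lift (fun k => if k = i then FreeGroup.of i * FreeGroup.of j
          else FreeGroup.of k)) (FreeGroup.of k) =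
        if k = i then FreeGroup.of i * FreeGroup.of j else FreeGroup.of k :=
      fun k => FreeGroup.lift_apply_of
    have hgij : ∀ k : Fin r,
        (FreeGroup.lift (fun k => if k = i then FreeGroup.of i * (FreeGroup.of j)⁻¹
          else FreeGroup.of k)) (FreeGroup.of k) =
        if k = i then FreeGroup.of i * (FreeGroup.of j)⁻¹ else FreeGroup.of k :=
      fun k => FreeGroup.lift_apply_of
    have h1 : (FreeGroup.lift (fun k => if k = i then FreeGroup.of i * (FreeGroup.of j)⁻¹
        else FreeGroup.of k)).comp (FreeGroup.lift (fun k => if k = i then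
        FreeGroup.of i * FreeGroup.of j else FreeGroup.of k)) = MonoidHom.id (F r) := by
      apply FreeGroup.ext_hom
      intro k
      by_cases hk : k = i
      · subst hk
        rw [MonoidHom.comp_apply, MonoidHom.id_apply, hfij, if_pos rfl, _root_.map_mul,
          hgij, hgij, if_pos rfl, if_neg hji]
        group
      · rw [MonoidHom.comp_apply, MonoidHom.id_apply, hfij, if_neg hk, hgij, if_neg hk]
    have h2 : (FreeGroup.lift (fun k => if k = i then FreeGroup.of i * FreeGroup.of j
        else FreeGroup.of k)).comp (FreeGroup.lift (fun k => if k = i then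
        FreeGroup.of i * (FreeGroup.of j)⁻¹ else FreeGroup.of k)) = MonoidHom.id (F r) := by
      apply FreeGroup.ext_hom
      intro k
      by_cases hk : k = i
      · subst hk
        rw [MonoidHom.comp_apply, MonoidHom.id_apply, hgij, if_pos rfl, _root_.map_mul,
          _root_.map_inv, hfij, hfij, if_pos rfl, if_neg hji]
        group
      · rw [MonoidHom.comp_apply, MonoidHom.id_apply, hgij, if_neg hk, hfij, if_neg hk]
    refine ⟨(MonoidHom.toMulEquiv _ _ h1 h2).trans φ, i, ?_⟩
    rw [MulEquiv.trans_apply]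
    rw [show ((MonoidHom.toMulEquiv _ _ h1 h2) (FreeGroup.of i) : F r) =
      FreeGroup.of i * FreeGroup.of j from by rw [show ((MonoidHom.toMulEquiv _ _ h1 h2)
        (FreeGroup.of i) : F r) = (FreeGroup.lift (fun k => if k = i then
        FreeGroup.of i * FreeGroup.of j else FreeGroup.of k)) (FreeGroup.of i) from rfl,
        hfij, if_pos rfl]]
    rw [_root_.map_mul, hφ, hφ]
  -- contradiction with primitivity-blocking
  exact hblock (B i * B j) hprim hcyc
    (List.IsInfix.trans hsub (by rw [hmul]; exact (List.prefix_append _ _).isInfix))
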